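/- Let (X_a)_{a∈A} be a family of nonempty finite integer sets indexed by a nonempty finite set A. There exist a tree H with vertex set A and an antisymmetric integer edge-weight function ϖ on H such that (1) every value of ϖ is a difference of two elements of ⋃_{a∈A} X_a, and (2) every family in S(H, ϖ) minimizes |⋃_{a∈A} (X_a + t_a)| over all (t_a) ∈ ℤ^A. -/

import Mathlib

/-- The translate `S + t = {s + t : s ∈ S}`. -/
def shift (S : Finset ℤ) (t : ℤ) : Finset ℤ := S.image (· + t)

lemma shift_add (S : Finset ℤ) (u δ : ℤ) :
    shift S (u + δ) = (shift S u).image (· + δ) := by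
  rw [shift, shift, Finset.image_image]
  exact Finset.image_congr (fun x _ => by simp [Function.comp, add_assoc])

lemma mem_shift {S : Finset ℤ} {u y : ℤ} : y ∈ shift S u ↔ ∃ x ∈ S, x + u = y := by
  rw [shift, Finset.mem_image]

lemma biUnion_split {β γ : Type*} [DecidableEq γ] [Fintype β] [DecidableEq β]
    (P : Finset β) (g : β → Finset γ) :
    Finset.univ.biUnion g = P.biUnion g ∪ Pᶜ.biUnion g := by
  ext y
  simp only [Finset.mem_biUnion, Finset.mem_union, Finset.mem_univ, true_and,
    Finset.mem_compl]
  constructor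
  · rintro ⟨c, h⟩
    by_cases hc : c ∈ P
    · exact Or.inl ⟨c, hc, h⟩
    · exact Or.inr ⟨c, hc, h⟩
  · rintro (⟨c, -, h⟩ | ⟨c, -, h⟩) <;> exact ⟨c, h⟩

/-- A connected graph contains a spanning tree. -/
lemma exists_tree {V : Type*} [Fintype V] (G : SimpleGraph V) (hG : G.Connected) :
    ∃ H ≤ G, H.Connected ∧ H.IsAcyclic := by
  classical
  set N : SimpleGraph V → ℕ := fun H => H.edgeSet.toFinite.toFinset.card with hN
  set s : Set ℕ := {n | ∃ H, H ≤ G ∧ H.Connected ∧ N H = n} with hs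
  have hsne : s.Nonempty := ⟨N G, G, le_refl _, hG, rfl⟩
  obtain ⟨H, hHG, hHc, hNH⟩ := Nat.sInf_mem hsne
  refine ⟨H, hHG, hHc, ?_⟩
  by_contra hcyc
  simp only [SimpleGraph.IsAcyclic, not_forall, not_not] at hcyc
  obtain ⟨v, c, hc⟩ := hcyc
  -- get an edge of the cycle
  obtain ⟨x, y, hxy⟩ : ∃ x y, s(x, y) ∈ c.edges := by
    cases c with
    | nil => exact absurd hc (by simp [SimpleGraph.Walk.isCycle_def])
    | cons h p =>
      rename_i w
      exact ⟨v, w, by simp⟩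
  have hreach : H.Adj x y ∧ (H \ SimpleGraph.fromEdgeSet {s(x, y)}).Reachable x y :=
    (SimpleGraph.adj_and_reachable_delete_edges_iff_exists_cycle).2 ⟨v, c, hc, hxy⟩
  set H' := H \ SimpleGraph.fromEdgeSet {s(x, y)} with hH'
  have hH'le : H' ≤ H := sdiff_le
  -- H' is connected
  have htrans : ∀ a b : V, H.Reachable a b → H'.Reachable a b := by
    intro a b hab
    obtain ⟨p⟩ := hab
    induction p with
    | nil => exact SimpleGraph.Reachable.refl _
    | @cons a m b h p ih =>
      refine SimpleGraph.Reachable.trans ?_ ih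
      by_cases he : s(a, m) = s(x, y)
      · rw [Sym2.eq_iff] at he
        rcases he with ⟨rfl, rfl⟩ | ⟨rfl, rfl⟩
        · exact hreach.2
        · exact hreach.2.symm
      · exact SimpleGraph.Adj.reachable (by
          rw [hH', SimpleGraph.sdiff_adj]
          exact ⟨h, fun hadj => he ((SimpleGraph.fromEdgeSet_adj _).1 hadj).1⟩)
  have hne := hHc.nonempty
  have hH'c : H'.Connected := SimpleGraph.Connected.mk (fun a b => htrans a b (hHc.preconnected a b))
  -- H' has strictly fewer edges
  have hlt : N H' < N H := by
    apply Finset.card_lt_card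
    rw [Finset.ssubset_iff_of_subset]
    · refine ⟨s(x, y), ?_, ?_⟩
      · rw [Set.Finite.mem_toFinset]; exact hreach.1
      · rw [Set.Finite.mem_toFinset]
        simp only [SimpleGraph.mem_edgeSet, hH', SimpleGraph.sdiff_adj]
        rintro ⟨-, hbad⟩
        exact hbad ((SimpleGraph.fromEdgeSet_adj _).2 ⟨rfl, hreach.1.ne⟩)
    · intro e he
      rw [Set.Finite.mem_toFinset] at he ⊢
      exact SimpleGraph.edgeSet_mono hH'le he
  have : sInf s ≤ N H' := Nat.sInf_le ⟨H', le_trans hH'le hHG, hH'c, rfl⟩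
  omega

theorem stmt_12 {α : Type*} [Fintype α] [DecidableEq α] [Nonempty α]
    (X : α → Finset ℤ) (hX : ∀ a, (X a).Nonempty) :
    ∃ (H : SimpleGraph α) (ϖ : α → α → ℤ),
      H.Connected ∧ H.IsAcyclic
      ∧ (∀ b c, H.Adj b c → ϖ b c = -ϖ c b)
      ∧ (∀ b c, H.Adj b c →
          ∃ u ∈ Finset.univ.biUnion X, ∃ v ∈ Finset.univ.biUnion X, ϖ b c = u - v)
      ∧ (∀ t : α → ℤ, (∀ b c, H.Adj b c → t b - t c = ϖ b c) →
          ∀ t' : α → ℤ,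
            (Finset.univ.biUnion fun a => shift (X a) (t a)).card
              ≤ (Finset.univ.biUnion fun a => shift (X a) (t' a)).card) := by
  classical
  set f : (α → ℤ) → ℕ := fun t => (Finset.univ.biUnion fun a => shift (X a) (t a)).card with hf
  obtain ⟨t₀, ht₀⟩ : ∃ t₀, f t₀ = sInf (Set.range f) := Nat.sInf_mem (Set.range_nonempty f)
  have hmin : ∀ t, f t₀ ≤ f t := fun t => ht₀ ▸ Nat.sInf_le ⟨t, rfl⟩
  -- intersection graph
  set G : SimpleGraph α :=
    { Adj := fun a b => a ≠ b ∧ (shift (X a) (t₀ a) ∩ shift (X b) (t₀ b)).Nonempty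
      symm := ⟨fun a b ⟨hne, hint⟩ => ⟨hne.symm, by rwa [Finset.inter_comm]⟩⟩
      loopless := ⟨fun a ⟨hne, _⟩ => hne rfl⟩ } with hG
  -- G is connected
  have hGconn : G.Connected := by
    rw [SimpleGraph.connected_iff]
    refine ⟨?_, inferInstance⟩
    intro a b
    by_contra hnr
    -- translate the non-reachable part to overlap
    obtain ⟨xa, hxa⟩ := hX a
    obtain ⟨xb, hxb⟩ := hX b
    set δ : ℤ := (xa + t₀ a) - (xb + t₀ b) with hδ
    set P : Finset α := Finset.univ.filter (fun c => G.Reachable a c) with hP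
    set A : Finset ℤ := P.biUnion (fun c => shift (X c) (t₀ c)) with hA
    set B : Finset ℤ := Pᶜ.biUnion (fun c => shift (X c) (t₀ c)) with hB
    have haP : a ∈ P := by
      rw [hP, Finset.mem_filter]
      exact ⟨Finset.mem_univ _, SimpleGraph.Reachable.refl a⟩
    have hbP : b ∉ P := by simp [hP, hnr]
    -- sets from different components are disjoint
    have hdisj : Disjoint A B := by
      rw [Finset.disjoint_left]
      intro z hzA hzB
      rw [hA, Finset.mem_biUnion] at hzA
      rw [hB, Finset.mem_biUnion] at hzB
      obtain ⟨c, hcP, hzc⟩ := hzA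
      obtain ⟨d, hdP, hzd⟩ := hzB
      rw [Finset.mem_compl] at hdP
      have hne : c ≠ d := fun h => hdP (h ▸ hcP)
      have hadj : G.Adj c d := ⟨hne, z, Finset.mem_inter.2 ⟨hzc, hzd⟩⟩
      rw [hP, Finset.mem_filter] at hcP
      exact hdP (by simp [hP, hcP.2.trans hadj.reachable])
    set t' : α → ℤ := fun c => if c ∈ P then t₀ c else t₀ c + δ with ht'
    -- the new union
    have hU' : (Finset.univ.biUnion fun c => shift (X c) (t' c))
        = A ∪ B.image (· + δ) := by
      rw [hA, hB, Finset.biUnion_image, biUnion_split P]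
      congr 1
      · exact Finset.biUnion_congr rfl (fun c hc => by simp [ht', hc])
      · refine Finset.biUnion_congr rfl (fun c hc => ?_)
        rw [Finset.mem_compl] at hc
        simp [ht', hc, shift_add]
    have hmem1 : xa + t₀ a ∈ A := by
      rw [hA, Finset.mem_biUnion]
      exact ⟨a, haP, mem_shift.2 ⟨xa, hxa, rfl⟩⟩
    have hmem2 : xa + t₀ a ∈ B.image (· + δ) := by
      rw [Finset.mem_image]
      refine ⟨xb + t₀ b, ?_, by rw [hδ]; ring⟩
      rw [hB, Finset.mem_biUnion]
      exact ⟨b, Finset.mem_compl.2 hbP, mem_shift.2 ⟨xb, hxb, rfl⟩⟩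
    have hcard1 : f t' < A.card + B.card := by
      rw [hf]
      simp only
      rw [hU']
      have h1 : (A ∪ B.image (· + δ)).card + (A ∩ B.image (· + δ)).card
          = A.card + (B.image (· + δ)).card := Finset.card_union_add_card_inter _ _
      have h2 : 0 < (A ∩ B.image (· + δ)).card :=
        Finset.card_pos.2 ⟨xa + t₀ a, Finset.mem_inter.2 ⟨hmem1, hmem2⟩⟩
      have h3 : (B.image (· + δ)).card ≤ B.card := Finset.card_image_le
      omega
    have hcard2 : f t₀ = A.card + B.card := by
      rw [hf]
      simp only
      rw [biUnion_split P, ← hA, ← hB]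
      exact Finset.card_union_of_disjoint hdisj
    have := hmin t'
    omega
  -- take a spanning tree
  obtain ⟨H, hHG, hHc, hHa⟩ := exists_tree G hGconn
  refine ⟨H, fun b c => t₀ b - t₀ c, hHc, hHa, fun b c _ => by ring, ?_, ?_⟩
  · -- weights are differences of elements of the union
    intro b c hbc
    obtain ⟨hne, y, hy⟩ := hHG hbc
    rw [Finset.mem_inter] at hy
    obtain ⟨u, hu, hu'⟩ := mem_shift.1 hy.1
    obtain ⟨v, hv, hv'⟩ := mem_shift.1 hy.2
    refine ⟨v, Finset.mem_biUnion.2 ⟨c, Finset.mem_univ _, hv⟩,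
      u, Finset.mem_biUnion.2 ⟨b, Finset.mem_univ _, hu⟩, by dsimp only; omega⟩
  · -- any solution is optimal
    intro t ht t'
    -- t - t₀ is constant on the connected graph H
    have hconst : ∀ c d : α, t c - t₀ c = t d - t₀ d := by
      intro c d
      obtain ⟨p⟩ := hHc.preconnected c d
      induction p with
      | nil => rfl
      | @cons u m w h p ih =>
        have := ht u m h
        dsimp only at this
        omega
    obtain ⟨a₀⟩ := ‹Nonempty α›
    set κ : ℤ := t a₀ - t₀ a₀ with hκ
    have htκ : ∀ c, t c = t₀ c + κ := fun c => by have := hconst c a₀; omega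
    have : f t = f t₀ := by
      rw [hf]
      simp only
      have : (Finset.univ.biUnion fun a => shift (X a) (t a))
          = (Finset.univ.biUnion fun a => shift (X a) (t₀ a)).image (· + κ) := by
        rw [Finset.biUnion_image]
        exact Finset.biUnion_congr rfl (fun c _ => by rw [htκ c, shift_add])
      rw [this, Finset.card_image_of_injective _ (add_left_injective κ)]
    calc f t = f t₀ := this
      _ ≤ f t' := hmin t'
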